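/- Pochhammer ratio bound: for every η > 1/8 and τ ∈ (0,1), sup over n ∈ ℤ_{≥1} and complex z with |z| = 1 of τ^{η n²} · |((-τ^{-n/2} z; τ)_∞ / (-τ^{n/2} z; τ)_∞) · ((τ^{1+n} z²; τ)_∞ / (τ z²; τ)_∞)| is finite. -/

import Mathlib

open Complex Finset


/-- The infinite q-Pochhammer symbol `(a; q)_∞ = ∏_{k=0}^∞ (1 - q^k a)`. -/
noncomputable def pochinf (a q : ℂ) : ℂ := ∏' k : ℕ, (1 - q ^ k * a)

lemma poch_factor_ne (q a : ℂ) (k : ℕ) (hq : ‖q‖ ≤ 1) (ha : ‖a‖ < 1) :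
    (1 : ℂ) - q ^ k * a ≠ 0 := by
  intro h
  have h1 : (1 : ℂ) = q ^ k * a := by linear_combination h
  have : ‖q ^ k * a‖ < 1 := by
    rw [norm_mul, norm_pow]
    calc ‖q‖ ^ k * ‖a‖ ≤ 1 * ‖a‖ := by
          apply mul_le_mul_of_nonneg_right (pow_le_one₀ (by positivity) hq) (by positivity)
      _ < 1 := by simpa using ha
  rw [← h1] at this
  simp at this

lemma poch_summable_log (q a : ℂ) (hq : ‖q‖ < 1) (ha : ‖a‖ < 1) :
    Summable fun k : ℕ => Complex.log (1 - q ^ k * a) := by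
  set c := ‖a‖ with hc
  have hc0 : 0 ≤ c := norm_nonneg a
  have hc1 : c < 1 := ha
  apply Summable.of_norm_bounded (g := fun k => ((c / (2 * (1 - c)) + 1) * c) * ‖q‖ ^ k)
  · exact (summable_geometric_of_lt_one (norm_nonneg q) hq).mul_left _
  · intro k
    set w : ℂ := -(q ^ k * a) with hw
    have hwn : ‖w‖ = ‖q‖ ^ k * c := by
      simp [hw, norm_neg, norm_mul, norm_pow, hc]
    have hwle : ‖w‖ ≤ c := by
      rw [hwn]
      calc ‖q‖ ^ k * c ≤ 1 * c :=
            mul_le_mul_of_nonneg_right (pow_le_one₀ (norm_nonneg q) hq.le) hc0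
        _ = c := one_mul c
    have hwlt : ‖w‖ < 1 := lt_of_le_of_lt hwle hc1
    have h1 : (1 : ℂ) - q ^ k * a = 1 + w := by rw [hw]; ring
    rw [h1]
    have hwnn : (0:ℝ) ≤ ‖w‖ := norm_nonneg w
    have hinv : (1 - ‖w‖)⁻¹ ≤ (1 - c)⁻¹ := by
      apply inv_anti₀ (by linarith) (by linarith)
    have hinvnn : (0:ℝ) ≤ (1 - c)⁻¹ := inv_nonneg.mpr (by linarith)
    calc ‖Complex.log (1 + w)‖ ≤ ‖w‖ ^ 2 * (1 - ‖w‖)⁻¹ / 2 + ‖w‖ :=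
          Complex.norm_log_one_add_le hwlt
      _ ≤ (c / (2 * (1 - c)) + 1) * ‖w‖ := by
          have h1 : ‖w‖ ^ 2 * (1 - ‖w‖)⁻¹ ≤ (c * ‖w‖) * (1 - c)⁻¹ := by
            have : ‖w‖ ^ 2 * (1 - ‖w‖)⁻¹ ≤ ‖w‖ ^ 2 * (1 - c)⁻¹ := by
              apply mul_le_mul_of_nonneg_left hinv (by positivity)
            refine this.trans ?_
            apply mul_le_mul_of_nonneg_right _ hinvnn
            nlinarith
          have hrw : c / (2 * (1 - c)) = c * (1 - c)⁻¹ * 2⁻¹ := by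
            rw [mul_comm 2, div_mul_eq_div_div, div_eq_mul_inv c, div_eq_mul_inv]
          rw [hrw]
          nlinarith
      _ ≤ (c / (2 * (1 - c)) + 1) * c * ‖q‖ ^ k := by
          rw [hwn]
          have hK : (0:ℝ) ≤ c / (2 * (1 - c)) + 1 := by
            have := div_nonneg hc0 (show (0:ℝ) ≤ 2 * (1 - c) by linarith)
            linarith
          nlinarith [pow_nonneg (norm_nonneg q) k]

lemma poch_multipliable (q a : ℂ) (hq : ‖q‖ < 1) (ha : ‖a‖ < 1) :
    Multipliable fun k : ℕ => (1 : ℂ) - q ^ k * a :=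
  Complex.multipliable_of_summable_log (poch_summable_log q a hq ha)

lemma poch_ne_zero (q a : ℂ) (hq : ‖q‖ < 1) (ha : ‖a‖ < 1) :
    pochinf a q ≠ 0 := by
  have h2 := Complex.cexp_tsum_eq_tprod (f := fun k : ℕ => 1 - q ^ k * a)
    (fun k => poch_factor_ne q a k hq.le ha)
    (poch_summable_log q a hq ha)
  rw [pochinf, ← h2]
  exact Complex.exp_ne_zero _

set_option maxHeartbeats 2000000 in
lemma poch_split (q a : ℂ) (n : ℕ) (hq : ‖q‖ < 1)
    (ha2 : ‖q ^ n * a‖ < 1) :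
    pochinf a q = (∏ k ∈ range n, (1 - q ^ k * a)) * pochinf (q ^ n * a) q := by
  have hm : Multipliable fun i : ℕ => (1 : ℂ) - q ^ (i + n) * a := by
    have he : (fun i : ℕ => (1 : ℂ) - q ^ (i + n) * a)
        = fun i => 1 - q ^ i * (q ^ n * a) := by
      funext i; rw [pow_add]; ring
    rw [he]
    exact poch_multipliable q _ hq ha2
  rw [pochinf, ← Multipliable.prod_mul_tprod_nat_mul' (f := fun k : ℕ => 1 - q ^ k * a) (k := n) hm, pochinf]
  congr 1
  exact tprod_congr fun i => by rw [pow_add]; ring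

set_option maxHeartbeats 1000000

/-- **Pochhammer ratio bound**: for every `η > 1/8` and `τ ∈ (0,1)`, the quantity
`τ^{η n²} |((-τ^{-n/2} z; τ)_∞ / (-τ^{n/2} z; τ)_∞) ((τ^{1+n} z²; τ)_∞ / (τ z²; τ)_∞)|`
is bounded uniformly over `n ≥ 1` and `|z| = 1`. -/
theorem pochhammer_ratio_bound (η τ : ℝ) (hη : 1 / 8 < η)
    (hτ : τ ∈ Set.Ioo (0 : ℝ) 1) :
    ∃ C : ℝ, ∀ n : ℕ, 1 ≤ n → ∀ z : ℂ, ‖z‖ = 1 →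
      τ ^ (η * (n : ℝ) ^ 2) *
        ‖
          ((pochinf (-(((τ ^ (-(n : ℝ) / 2) : ℝ) : ℂ) * z)) (τ : ℂ) /
              pochinf (-(((τ ^ ((n : ℝ) / 2) : ℝ) : ℂ) * z)) (τ : ℂ)) *
            (pochinf ((τ : ℂ) ^ (1 + n) * z ^ 2) (τ : ℂ) /
              pochinf ((τ : ℂ) * z ^ 2) (τ : ℂ)))‖ ≤ C := by
  obtain ⟨hτ0, hτ1⟩ := hτ
  set L : ℝ := -Real.log τ with hLdef
  have hL0 : 0 < L := by
    have := Real.log_neg hτ0 hτ1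
    simp only [hLdef]; linarith
  set ε : ℝ := η - 1 / 8 with hεdef
  have hε0 : 0 < ε := by simp only [hεdef]; linarith
  set D : ℝ := τ / (1 - τ) ^ 2 with hDdef
  refine ⟨Real.exp ((Real.log 2 + L) ^ 2 / (4 * (ε * L)) + D), ?_⟩
  intro n hn z hz
  have habsq : ‖(τ : ℂ)‖ = τ := by
    rw [Complex.norm_real, Real.norm_eq_abs, abs_of_pos hτ0]
  have hq : ‖(τ : ℂ)‖ < 1 := by rw [habsq]; exact hτ1
  set q : ℂ := (τ : ℂ) with hqdef
  set a1 : ℂ := -(((τ ^ (-(n : ℝ) / 2) : ℝ) : ℂ) * z) with ha1def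
  set a2 : ℂ := -(((τ ^ ((n : ℝ) / 2) : ℝ) : ℂ) * z) with ha2def
  set m : ℕ := (n + 1) / 2 with hmdef
  have hm1 : n ≤ 2 * m := by omega
  have hm2 : 2 * m ≤ n + 1 := by omega
  have hmn : m ≤ n := by omega
  have hnr : (1 : ℝ) ≤ (n : ℝ) := by exact_mod_cast hn
  -- abs values
  have habsa2 : ‖a2‖ = τ ^ ((n : ℝ) / 2) := by
    rw [ha2def, norm_neg, norm_mul, Complex.norm_real, Real.norm_eq_abs, hz, mul_one,
      abs_of_pos (Real.rpow_pos_of_pos hτ0 _)]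
  have ha2lt : ‖a2‖ < 1 := by
    rw [habsa2]
    exact Real.rpow_lt_one hτ0.le hτ1 (by positivity)
  -- the key cast identity
  have e1 : q ^ n * a1 = a2 := by
    rw [ha1def, ha2def, hqdef]
    have : ((τ : ℂ)) ^ n * ((τ ^ (-(n : ℝ) / 2) : ℝ) : ℂ)
        = ((τ ^ ((n : ℝ) / 2) : ℝ) : ℂ) := by
      rw [← Complex.ofReal_pow, ← Complex.ofReal_mul]
      congr 1
      rw [← Real.rpow_natCast τ n, ← Real.rpow_add hτ0]
      congr 1
      ring
    calc (τ : ℂ) ^ n * -(((τ ^ (-(n : ℝ) / 2) : ℝ) : ℂ) * z)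
        = -(((τ : ℂ) ^ n * ((τ ^ (-(n : ℝ) / 2) : ℝ) : ℂ)) * z) := by ring
      _ = -(((τ ^ ((n : ℝ) / 2) : ℝ) : ℂ) * z) := by rw [this]
  have e2 : q ^ n * (q * z ^ 2) = q ^ (1 + n) * z ^ 2 := by
    rw [pow_add]; ring
  -- splitting identities
  have hs1 : pochinf a1 q = (∏ k ∈ range n, (1 - q ^ k * a1)) * pochinf a2 q := by
    have := poch_split q a1 n hq (by rw [e1]; exact ha2lt)
    rwa [e1] at this
  have hs2 : pochinf (q * z ^ 2) q
      = (∏ k ∈ range n, (1 - q ^ k * (q * z ^ 2))) * pochinf (q ^ (1 + n) * z ^ 2) q := by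
    have := poch_split q (q * z ^ 2) n hq
      (by rw [e2, norm_mul, norm_pow, norm_pow, habsq, hz]
          simp only [one_pow, mul_one]
          exact pow_lt_one₀ hτ0.le hτ1 (by omega))
    rwa [e2] at this
  set P1 : ℂ := ∏ k ∈ range n, (1 - q ^ k * a1) with hP1def
  set P2 : ℂ := ∏ k ∈ range n, (1 - q ^ k * (q * z ^ 2)) with hP2def
  -- nonvanishing
  have habsqz : ‖q * z ^ 2‖ = τ := by
    rw [norm_mul, norm_pow, habsq, hz]; ring
  have hB : pochinf a2 q ≠ 0 := poch_ne_zero q a2 hq ha2lt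
  have hEabs : ‖q ^ (1 + n) * z ^ 2‖ < 1 := by
    rw [norm_mul, norm_pow, norm_pow, habsq, hz]
    simp only [one_pow, mul_one]
    exact pow_lt_one₀ hτ0.le hτ1 (by omega)
  have hE : pochinf (q ^ (1 + n) * z ^ 2) q ≠ 0 := poch_ne_zero q _ hq hEabs
  have hP2 : P2 ≠ 0 := by
    rw [hP2def]
    apply Finset.prod_ne_zero_iff.mpr
    intro k _
    exact poch_factor_ne q (q * z ^ 2) k hq.le (by rw [habsqz]; exact hτ1)
  -- ratio identity
  have hratio : (pochinf a1 q / pochinf a2 q) *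
      (pochinf (q ^ (1 + n) * z ^ 2) q / pochinf (q * z ^ 2) q) = P1 / P2 := by
    rw [hs1, hs2]
    field_simp
  -- numerator bound
  have hprodr : ∀ (f : ℕ → ℝ), ∏ k ∈ range n, τ ^ f k = τ ^ (∑ k ∈ range n, f k) := by
    intro f
    simp_rw [Real.rpow_def_of_pos hτ0, ← Real.exp_sum, Finset.mul_sum]
  set S : ℕ := ∑ k ∈ range n, (m - k) with hSdef
  have hnum : ‖P1‖ ≤ 2 ^ n * τ ^ (-(S : ℝ)) := by
    have hterm : ∀ k ∈ range n, ‖1 - q ^ k * a1‖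
        ≤ 2 * τ ^ (-(((m - k : ℕ) : ℝ))) := by
      intro k hk
      have habsa1 : ‖a1‖ = τ ^ (-(n : ℝ) / 2) := by
        rw [ha1def, norm_neg, norm_mul, Complex.norm_real, Real.norm_eq_abs, hz, mul_one,
          abs_of_pos (Real.rpow_pos_of_pos hτ0 _)]
      have hv : ‖q ^ k * a1‖ = τ ^ ((k : ℝ) + (-(n : ℝ) / 2)) := by
        rw [norm_mul, norm_pow, habsq, habsa1, ← Real.rpow_natCast τ k,
          ← Real.rpow_add hτ0]
      have htri : ‖1 - q ^ k * a1‖ ≤ 1 + ‖q ^ k * a1‖ := by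
        calc ‖1 - q ^ k * a1‖ ≤ ‖(1 : ℂ)‖ + ‖q ^ k * a1‖ := by
              simpa [sub_eq_add_neg, norm_neg] using
                norm_add_le 1 (-(q ^ k * a1))
          _ = 1 + ‖q ^ k * a1‖ := by rw [norm_one]
      have hexp : -(((m - k : ℕ) : ℝ)) ≤ (k : ℝ) + (-(n : ℝ) / 2) := by
        rcases le_or_gt m k with h | h
        · rw [Nat.sub_eq_zero_of_le h]
          have h1 : (n : ℝ) ≤ 2 * (k : ℝ) := by exact_mod_cast (by omega : n ≤ 2 * k)
          push_cast
          linarith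
        · rw [Nat.cast_sub h.le]
          have h1 : (n : ℝ) ≤ 2 * (m : ℝ) := by exact_mod_cast hm1
          linarith
      have t1 : τ ^ ((k : ℝ) + (-(n : ℝ) / 2)) ≤ τ ^ (-(((m - k : ℕ) : ℝ))) :=
        Real.rpow_le_rpow_of_exponent_ge hτ0 hτ1.le hexp
      have t2 : (1 : ℝ) ≤ τ ^ (-(((m - k : ℕ) : ℝ))) :=
        Real.one_le_rpow_of_pos_of_le_one_of_nonpos hτ0 hτ1.le
          (neg_nonpos.mpr (Nat.cast_nonneg _))
      rw [hv] at htri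
      linarith
    calc ‖P1‖ = ∏ k ∈ range n, ‖1 - q ^ k * a1‖ := by
          rw [hP1def, norm_prod]
      _ ≤ ∏ k ∈ range n, (2 * τ ^ (-(((m - k : ℕ) : ℝ)))) :=
          Finset.prod_le_prod (fun k _ => norm_nonneg _) hterm
      _ = 2 ^ n * τ ^ (-(S : ℝ)) := by
          rw [Finset.prod_mul_distrib, Finset.prod_const, card_range,
            hprodr fun k => -(((m - k : ℕ) : ℝ))]
          congr 2
          rw [hSdef]
          push_cast
          rw [Finset.sum_neg_distrib]
  -- bound on S
  have hS2 : 2 * S = m * m + m := by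
    obtain ⟨m', hm'⟩ : ∃ m', m = m' + 1 := ⟨m - 1, by omega⟩
    have h1 : S = ∑ k ∈ range m, (m - k) :=
      (Finset.sum_subset (Finset.range_subset_range.mpr hmn)
        (fun x _ hx => by simp only [Finset.mem_range, not_lt] at hx; omega)).symm
    have h2 : ∑ k ∈ range m, (m - k) = ∑ k ∈ range m, (k + 1) := by
      rw [← Finset.sum_range_reflect (fun j => j + 1) m]
      apply Finset.sum_congr rfl
      intro x hx
      simp only [Finset.mem_range] at hx
      omega
    have h3 : ∑ k ∈ range m, (k + 1) = (∑ k ∈ range m, k) + m := by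
      rw [Finset.sum_add_distrib, Finset.sum_const, card_range, smul_eq_mul, mul_one]
    have hg := Finset.sum_range_id_mul_two m
    rw [hm'] at hg ⊢
    rw [h1, h2, h3, hm']
    simp only [Nat.add_sub_cancel] at hg
    calc 2 * (∑ k ∈ range (m' + 1), k + (m' + 1))
        = (∑ k ∈ range (m' + 1), k) * 2 + 2 * (m' + 1) := by ring
      _ = (m' + 1) * m' + 2 * (m' + 1) := by rw [hg]
      _ = (m' + 1) * (m' + 1) + (m' + 1) := by ring
  have hSle : (S : ℝ) ≤ (n : ℝ) ^ 2 / 8 + n := by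
    have h1 : 2 * (S : ℝ) = (m : ℝ) * m + m := by exact_mod_cast hS2
    have h2 : 2 * (m : ℝ) ≤ (n : ℝ) + 1 := by exact_mod_cast hm2
    have h3 : (0 : ℝ) ≤ (m : ℝ) := Nat.cast_nonneg _
    nlinarith
  -- denominator bound
  have hden : Real.exp (-D) ≤ ‖P2‖ := by
    have hterm2 : ∀ k ∈ range n, Real.exp (-(τ ^ (k + 1) / (1 - τ))) ≤ 1 - τ ^ (k + 1) := by
      intro k _
      set x : ℝ := τ ^ (k + 1) with hxdef
      have hx0 : 0 < x := by positivity
      have hxτ : x ≤ τ := by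
        calc x = τ ^ (k + 1) := rfl
          _ ≤ τ ^ 1 := pow_le_pow_of_le_one hτ0.le hτ1.le (by omega)
          _ = τ := pow_one τ
      have hx1 : x < 1 := lt_of_le_of_lt hxτ hτ1
      have hτ1' : (0 : ℝ) < 1 - τ := by linarith
      have h1 : x / (1 - τ) + 1 ≤ Real.exp (x / (1 - τ)) := Real.add_one_le_exp _
      have h2 : (1 - x) * (1 + x / (1 - τ)) = 1 + x * (τ - x) / (1 - τ) := by
        field_simp
        ring
      have h3 : (0 : ℝ) ≤ x * (τ - x) / (1 - τ) :=
        div_nonneg (mul_nonneg hx0.le (by linarith)) hτ1'.le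
      have h4 : 1 ≤ (1 - x) * Real.exp (x / (1 - τ)) := by
        calc (1 : ℝ) ≤ (1 - x) * (1 + x / (1 - τ)) := by rw [h2]; linarith
          _ ≤ (1 - x) * Real.exp (x / (1 - τ)) := by
              apply mul_le_mul_of_nonneg_left (by linarith) (by linarith)
      rw [Real.exp_neg]
      rw [inv_le_iff_one_le_mul₀ (Real.exp_pos _)]
      linarith [mul_comm (1 - x) (Real.exp (x / (1 - τ)))]
    have hterm3 : ∀ k ∈ range n, (1 - τ ^ (k + 1))
        ≤ ‖1 - q ^ k * (q * z ^ 2)‖ := by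
      intro k _
      have hv : ‖q ^ k * (q * z ^ 2)‖ = τ ^ (k + 1) := by
        rw [norm_mul, habsqz, norm_pow, habsq, pow_succ]
      calc 1 - τ ^ (k + 1) = ‖(1 : ℂ)‖ - ‖q ^ k * (q * z ^ 2)‖ := by
            rw [norm_one, hv]
        _ ≤ ‖1 - q ^ k * (q * z ^ 2)‖ := by
            have h := norm_sub_norm_le (1 : ℂ) (q ^ k * (q * z ^ 2))
            simp only [norm_one] at h
            rw [norm_one]
            exact h
    have hgeo : ∑ k ∈ range n, τ ^ (k + 1) ≤ τ / (1 - τ) := by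
      have hgs : ∑ k ∈ range n, τ ^ k ≤ (1 - τ)⁻¹ :=
        sum_le_hasSum (range n) (fun k _ => by positivity)
          (hasSum_geometric_of_lt_one hτ0.le hτ1)
      calc ∑ k ∈ range n, τ ^ (k + 1) = τ * ∑ k ∈ range n, τ ^ k := by
            rw [Finset.mul_sum]
            exact Finset.sum_congr rfl fun k _ => by rw [pow_succ]; ring
        _ ≤ τ * (1 - τ)⁻¹ := by
            apply mul_le_mul_of_nonneg_left hgs hτ0.le
        _ = τ / (1 - τ) := by rw [div_eq_mul_inv]
    calc Real.exp (-D) ≤ Real.exp (∑ k ∈ range n, -(τ ^ (k + 1) / (1 - τ))) := by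
          apply Real.exp_le_exp.mpr
          have hsum : ∑ k ∈ range n, -(τ ^ (k + 1) / (1 - τ))
              = -((∑ k ∈ range n, τ ^ (k + 1)) / (1 - τ)) := by
            rw [Finset.sum_neg_distrib, Finset.sum_div]
          rw [hsum, hDdef, neg_le_neg_iff]
          have hτ1' : (0 : ℝ) < 1 - τ := by linarith
          rw [div_le_div_iff₀ hτ1' (by positivity)]
          calc (∑ k ∈ range n, τ ^ (k + 1)) * (1 - τ) ^ 2
              ≤ (τ / (1 - τ)) * (1 - τ) ^ 2 := by
                apply mul_le_mul_of_nonneg_right hgeo (by positivity)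
            _ = τ * (1 - τ) := by field_simp
      _ = ∏ k ∈ range n, Real.exp (-(τ ^ (k + 1) / (1 - τ))) := Real.exp_sum _ _
      _ ≤ ∏ k ∈ range n, (1 - τ ^ (k + 1)) :=
          Finset.prod_le_prod (fun k _ => (Real.exp_pos _).le) hterm2
      _ ≤ ∏ k ∈ range n, ‖1 - q ^ k * (q * z ^ 2)‖ :=
          Finset.prod_le_prod (fun k _ => by
            have : τ ^ (k + 1) < 1 := pow_lt_one₀ hτ0.le hτ1 (by omega)
            linarith) hterm3
      _ = ‖P2‖ := by rw [hP2def, norm_prod]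
  -- final assembly
  have hcabs : ‖P1 / P2‖ = ‖P1‖ / ‖P2‖ := norm_div _ _
  calc τ ^ (η * (n : ℝ) ^ 2) * ‖(pochinf a1 q / pochinf a2 q) *
            (pochinf (q ^ (1 + n) * z ^ 2) q / pochinf (q * z ^ 2) q)‖
      = τ ^ (η * (n : ℝ) ^ 2) * (‖P1‖ / ‖P2‖) := by
        rw [hratio, hcabs]
    _ ≤ τ ^ (η * (n : ℝ) ^ 2) * ((2 ^ n * τ ^ (-(S : ℝ))) / Real.exp (-D)) := by
        apply mul_le_mul_of_nonneg_left _ (Real.rpow_nonneg hτ0.le _)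
        exact div_le_div₀ (by positivity) hnum (Real.exp_pos _) hden
    _ = 2 ^ n * (τ ^ (η * (n : ℝ) ^ 2) * τ ^ (-(S : ℝ))) * Real.exp D := by
        rw [Real.exp_neg, div_eq_mul_inv, inv_inv]
        ring
    _ = 2 ^ n * τ ^ (η * (n : ℝ) ^ 2 - (S : ℝ)) * Real.exp D := by
        rw [← Real.rpow_add hτ0, ← sub_eq_add_neg]
    _ ≤ 2 ^ n * τ ^ (ε * (n : ℝ) ^ 2 - (n : ℝ)) * Real.exp D := by
        apply mul_le_mul_of_nonneg_right _ (Real.exp_pos _).le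
        apply mul_le_mul_of_nonneg_left _ (by positivity)
        apply Real.rpow_le_rpow_of_exponent_ge hτ0 hτ1.le
        rw [hεdef]
        nlinarith
    _ ≤ Real.exp ((Real.log 2 + L) ^ 2 / (4 * (ε * L)) + D) := by
        have h2n : (2 : ℝ) ^ n = Real.exp ((n : ℝ) * Real.log 2) := by
          rw [Real.exp_nat_mul, Real.exp_log (by norm_num : (0:ℝ) < 2)]
        have hτr : τ ^ (ε * (n : ℝ) ^ 2 - (n : ℝ))
            = Real.exp (Real.log τ * (ε * (n : ℝ) ^ 2 - (n : ℝ))) :=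
          Real.rpow_def_of_pos hτ0 _
        rw [h2n, hτr, ← Real.exp_add, ← Real.exp_add]
        apply Real.exp_le_exp.mpr
        have hlogτ : Real.log τ = -L := by rw [hLdef]; ring
        rw [hlogτ]
        have hkey : (n : ℝ) * Real.log 2 + -L * (ε * (n : ℝ) ^ 2 - (n : ℝ))
            ≤ (Real.log 2 + L) ^ 2 / (4 * (ε * L)) := by
          rw [le_div_iff₀ (by positivity)]
          nlinarith [sq_nonneg (2 * (ε * L) * (n : ℝ) - (Real.log 2 + L))]
        linarith
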